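/- arXiv:2406.05512 — 3 statements merged into one kernel-verified Lean document; each statement's English description precedes it below -/
import Mathlib

section
/- Let n be divisible by k with n/k odd, and let v_{k+1} be the eigenvector of the path graph Laplacian L_n for eigenvalue λ_{k+1} = 2(1 - cos(kπ/n)), with components v_{k+1}(p) = cos(kπ(p-1/2)/n). Then for j in {1,...,n}, v_{k+1}(j) = 0 if and only if j = ((2i-1)n + k)/(2k) for some i ∈ {1,...,k}. -/
open Real

/-- For `k ∣ n` with `n/k` odd, the eigenvector `v_{k+1}` of the path graph Laplacian,
with `p`-th component `cos (kπ (p - 1/2) / n)` (`p = 1, ..., n`; zero-based `j : Fin n`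
stands for `p - 1`), vanishes at `j` iff `j + 1 = ((2i-1)n + k) / (2k)` for some
`i ∈ {1, ..., k}`, i.e. iff `2k (j + 1) = (2i - 1) n + k` for some such `i`. -/
theorem kth_eigenvector_zero_iff_k_centers (n k : ℕ) (hk : 0 < k) (hdvd : k ∣ n)
    (hodd : Odd (n / k)) (j : Fin n) :
    Real.cos ((k : ℝ) * Real.pi * ((j : ℕ) + 1/2) / n) = 0 ↔
      ∃ i : ℕ, 1 ≤ i ∧ i ≤ k ∧ 2 * k * ((j : ℕ) + 1) = (2 * i - 1) * n + k := by
  have hn : 0 < n := j.pos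
  have hn0 : (n : ℝ) ≠ 0 := Nat.cast_ne_zero.mpr hn.ne'
  have hπ : Real.pi ≠ 0 := Real.pi_ne_zero
  rw [Real.cos_eq_zero_iff]
  constructor
  · rintro ⟨m, hm⟩
    -- derive k*(2j+1) = (2m+1)*n over ℤ
    have hreal : (k : ℝ) * (2 * (j : ℕ) + 1) = (2 * (m : ℝ) + 1) * n := by
      field_simp at hm
      nlinarith [hm, Real.pi_pos]
    have hint : (k : ℤ) * (2 * (j : ℕ) + 1) = (2 * m + 1) * n := by
      exact_mod_cast hreal
    have hm0 : 0 ≤ m := by nlinarith [hint, hn, hk, (j : ℕ).zero_le]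
    refine ⟨m.toNat + 1, le_add_self, ?_, ?_⟩
    · -- (2m+1)*n = k*(2j+1) ≤ k*(2n-1) < 2kn
      have hj : (j : ℕ) < n := j.2
      have h2 : (2 * m + 1) * (n : ℤ) < 2 * k * n := by
        calc (2 * m + 1) * (n : ℤ) = k * (2 * (j : ℕ) + 1) := hint.symm
          _ < 2 * k * n := by push_cast; nlinarith [hj, hk]
      have : 2 * m + 1 < 2 * (k : ℤ) := by
        by_contra h
        push_neg at h
        nlinarith [hn]
      omega
    · have : (2 * (m.toNat + 1) - 1 : ℤ) = 2 * m + 1 := by omega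
      have hgoal : (2 * k * ((j : ℕ) + 1) : ℤ) = (2 * (m.toNat + 1) - 1) * n + k := by
        rw [this]; linarith [hint]
      have h1 : 1 ≤ m.toNat + 1 := le_add_self
      zify [show (1:ℕ) ≤ 2 * (m.toNat + 1) by omega]
      exact_mod_cast hgoal
  · rintro ⟨i, hi1, hik, heq⟩
    refine ⟨(i : ℤ) - 1, ?_⟩
    have hint : (k : ℤ) * (2 * (j : ℕ) + 1) = (2 * i - 1) * n := by
      have := heq
      zify [show (1:ℕ) ≤ 2 * i by omega] at this
      linarith
    have hreal : (k : ℝ) * (2 * (j : ℕ) + 1) = (2 * (i : ℝ) - 1) * n := by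
      exact_mod_cast hint
    have : (2 * ((i : ℝ) - 1) + 1) = 2 * (i : ℝ) - 1 := by ring
    field_simp
    push_cast
    nlinarith [hreal, Real.pi_pos]
end

section
/- The characteristic polynomial det(sI + L_n) of the negated path graph Laplacian satisfies: the constant coefficient is 0, the coefficient of s is n, the coefficient of s² is n(n²-1)/6, and the coefficient of s^{n-1} is 2(n-1), with leading coefficient 1. -/
open Real Polynomial

/-- The Laplacian matrix of the path graph on `n` vertices:
tridiagonal with diagonal `(1, 2, ..., 2, 1)` and off-diagonal entries `-1`. -/
def pathLaplacian (n : ℕ) : Matrix (Fin n) (Fin n) ℝ :=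
  Matrix.of fun i j =>
    if (i : ℕ) = (j : ℕ) then (if (i : ℕ) = 0 ∨ (i : ℕ) = n - 1 then 1 else 2)
    else if (i : ℕ) + 1 = (j : ℕ) ∨ (j : ℕ) + 1 = (i : ℕ) then -1 else 0


noncomputable section PathAux

/-- entry pattern of the auxiliary tridiagonal matrix -/
def Bent (m i j : ℕ) : Polynomial ℝ :=
  if i = j then (if i = m - 1 then X + 1 else X + 2)
  else if i + 1 = j ∨ j + 1 = i then -1 else 0

def Bmat (m : ℕ) : Matrix (Fin m) (Fin m) (Polynomial ℝ) :=
  Matrix.of fun i j => Bent m (i : ℕ) (j : ℕ)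

def qq : ℕ → Polynomial ℝ
  | 0 => 1
  | 1 => X + 1
  | (k+2) => (X + 2) * qq (k+1) - qq k

lemma Bent_shift1 (m i j : ℕ) : Bent (m+2) (i+1) (j+1) = Bent (m+1) i j := by
  simp only [Bent]
  split_ifs <;> first | rfl | omega

lemma Bent_shift2 (m i j : ℕ) (hi : i < m) (hj : j < m) :
    Bent (m+2) (i+2) (j+2) = Bent m i j := by
  simp only [Bent]
  split_ifs <;> first | rfl | omega

end PathAux
lemma Bent_col0 (m i : ℕ) (h : 2 ≤ i) : Bent m i 0 = 0 := by
  simp only [Bent]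
  split_ifs with h1 h2 h3
  · omega
  · omega
  · rcases h3 with h3 | h3 <;> first | exact h3.elim | omega
  · rfl

lemma Bent_row0 (m j : ℕ) (h : 2 ≤ j) : Bent m 0 j = 0 := by
  simp only [Bent]
  split_ifs with h1 h2 h3
  · omega
  · omega
  · rcases h3 with h3 | h3 <;> first | exact h3.elim | omega
  · rfl

section Det
open Matrix

lemma one_eq_succ_zero (k : ℕ) : (1 : Fin (k+2)) = (0 : Fin (k+1)).succ := rfl

/-- determinant of the minor obtained from `Bmat (k+2)` by deleting row 0 and column 1 -/
lemma det_minor01 (k : ℕ) :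
    ((Bmat (k+2)).submatrix Fin.succ (1 : Fin (k+2)).succAbove).det = - (Bmat k).det := by
  rw [Matrix.det_succ_column_zero, Fin.sum_univ_succ]
  have h1 : ((Bmat (k+2)).submatrix Fin.succ (1 : Fin (k+2)).succAbove) 0 0 = -1 := by
    simp only [Matrix.submatrix_apply, one_eq_succ_zero, Fin.succ_succAbove_zero,
      Bmat, Matrix.of_apply, Fin.val_succ, Fin.val_zero]
    simp [Bent]
  have h2 : (((Bmat (k+2)).submatrix Fin.succ (1 : Fin (k+2)).succAbove).submatrix
      (0 : Fin (k+1)).succAbove Fin.succ) = Bmat k := by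
    funext i j
    simp only [Matrix.submatrix_apply, Fin.succAbove_zero, one_eq_succ_zero,
      Fin.succ_succAbove_succ, Fin.succAbove_zero, Bmat, Matrix.of_apply, Fin.val_succ]
    exact Bent_shift2 k i j i.isLt j.isLt
  rw [h1, h2]
  have hrest : ∀ i : Fin k,
      ((Bmat (k+2)).submatrix Fin.succ (1 : Fin (k+2)).succAbove) i.succ 0 = 0 := by
    intro i
    simp only [Matrix.submatrix_apply, one_eq_succ_zero, Fin.succ_succAbove_zero,
      Bmat, Matrix.of_apply, Fin.val_succ, Fin.val_zero]
    exact Bent_col0 _ _ (by omega)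
  rw [Finset.sum_eq_zero (fun i _ => by rw [hrest i]; ring)]
  simp
end Det
section Det2
open Matrix

lemma det_aux (k : ℕ) (d : Polynomial ℝ) (M : Matrix (Fin (k+2)) (Fin (k+2)) (Polynomial ℝ))
    (h0 : M 0 0 = d) (h1 : M 0 1 = -1)
    (hrow : ∀ j : Fin (k+2), 2 ≤ (j : ℕ) → M 0 j = 0)
    (hl : ∀ (i : Fin (k+1)) (j : Fin (k+2)), M i.succ j = Bmat (k+2) i.succ j) :
    M.det = d * (Bmat (k+1)).det - (Bmat k).det := by
  rw [Matrix.det_succ_row_zero, Fin.sum_univ_succ, Fin.sum_univ_succ]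
  have e0 : (M.submatrix Fin.succ (0 : Fin (k+2)).succAbove) = Bmat (k+1) := by
    funext i j
    rw [Matrix.submatrix_apply, Fin.succAbove_zero, hl]
    simp only [Bmat, Matrix.of_apply, Fin.val_succ]
    exact Bent_shift1 k i j
  have e1 : (M.submatrix Fin.succ ((0 : Fin (k+1)).succ).succAbove) =
      ((Bmat (k+2)).submatrix Fin.succ (1 : Fin (k+2)).succAbove) := by
    funext i j
    rw [Matrix.submatrix_apply, Matrix.submatrix_apply, hl, one_eq_succ_zero]
  have hzero : ∀ j : Fin k, M 0 j.succ.succ = 0 := fun j => hrow _ (by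
    simp only [Fin.val_succ]; omega)
  rw [e0, e1, det_minor01, h0]
  have h1' : M 0 (0 : Fin (k+1)).succ = -1 := h1
  rw [h1', Finset.sum_eq_zero (fun j _ => by rw [hzero j]; ring)]
  simp only [Fin.val_zero, pow_zero, one_mul, Fin.val_succ, Fin.val_zero, pow_one]
  ring

lemma detB : ∀ k, (Bmat k).det = qq k := by
  have key : ∀ k, (Bmat k).det = qq k ∧ (Bmat (k+1)).det = qq (k+1) := by
    intro k
    induction k with
    | zero =>
      constructor
      · simp [Matrix.det_fin_zero, qq]
      · rw [show (Bmat 1).det = Bmat 1 0 0 from Matrix.det_fin_one _]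
        simp [Bmat, Bent, qq]
    | succ m ih =>
      refine ⟨ih.2, ?_⟩
      rw [det_aux m (X+2) (Bmat (m+2)) ?_ ?_ ?_ (fun i j => rfl)]
      · rw [ih.1, ih.2]; simp [qq]
      · show Bent (m+2) 0 0 = X + 2
        simp only [Bent, if_true, eq_self_iff_true]
        rw [if_neg (by omega)]
      · show Bent (m+2) 0 1 = -1
        simp [Bent]
      · intro j hj
        exact Bent_row0 _ _ hj
  exact fun k => (key k).1
end Det2

lemma charpoly_eq (k : ℕ) :
    (-(pathLaplacian (k+2))).charpoly = (X + 1) * qq (k+1) - qq k := by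
  show (Matrix.charmatrix _).det = _
  rw [det_aux k (X+1) _ ?_ ?_ ?_ ?_, detB, detB]
  · rw [Matrix.charmatrix_apply_eq]
    have : (-(pathLaplacian (k+2))) 0 0 = -1 := by
      simp [pathLaplacian]
    rw [this]
    simp
  · have h01 : (0 : Fin (k+2)) ≠ 1 := by
      intro h; exact absurd (congrArg Fin.val h) (by simp)
    rw [Matrix.charmatrix_apply_ne _ _ _ h01]
    have : (-(pathLaplacian (k+2))) 0 1 = 1 := by
      simp [pathLaplacian]
    rw [this]; simp
  · intro j hj
    have hne : (0 : Fin (k+2)) ≠ j := by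
      intro h; subst h; simp at hj
    rw [Matrix.charmatrix_apply_ne _ _ _ hne]
    have : (-(pathLaplacian (k+2))) 0 j = 0 := by
      simp only [Matrix.neg_apply, pathLaplacian, Matrix.of_apply, Fin.val_zero]
      rw [if_neg (by omega)]
      simp only [neg_eq_zero, ite_eq_right_iff]
      exact if_neg (by omega)
    rw [this]; simp
  · intro i j
    by_cases hij : i.succ = j
    · subst hij
      rw [Matrix.charmatrix_apply_eq]
      simp only [Matrix.neg_apply, pathLaplacian, Matrix.of_apply, Bmat, Bent,
        Fin.val_succ, eq_self_iff_true, if_true]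
      split_ifs <;> simp_all [map_ofNat] <;> ring
    · rw [Matrix.charmatrix_apply_ne _ _ _ hij]
      have hv : ((i.succ : Fin (k+2)) : ℕ) ≠ (j : ℕ) := fun h => hij (Fin.ext h)
      have hv' : ¬((i : ℕ) + 1 = (j : ℕ)) := by simpa using hv
      simp only [Matrix.neg_apply, pathLaplacian, Matrix.of_apply, Bmat, Bent, Fin.val_succ]
      split_ifs <;> first | exact absurd ‹_› hv' | simp
lemma qq_step (k : ℕ) : qq (k+2) = (X + 2) * qq (k+1) - qq k := rfl

lemma d_qq_step (k : ℕ) : derivative (qq (k+2)) =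
    qq (k+1) + (X + 2) * derivative (qq (k+1)) - derivative (qq k) := by
  rw [qq_step, derivative_sub, derivative_mul]
  simp

lemma dd_qq_step (k : ℕ) : derivative (derivative (qq (k+2))) =
    2 * derivative (qq (k+1)) + (X + 2) * derivative (derivative (qq (k+1)))
      - derivative (derivative (qq k)) := by
  rw [d_qq_step, derivative_sub, derivative_add, derivative_mul]
  simp
  ring

lemma qq_eval0 : ∀ k, (qq k).eval 0 = 1 := by
  have key : ∀ k, (qq k).eval 0 = 1 ∧ (qq (k+1)).eval 0 = 1 := by
    intro k
    induction k with
    | zero => constructor <;> simp [qq]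
    | succ m ih => exact ⟨ih.2, by rw [qq_step]; simp [ih.1, ih.2]; norm_num⟩
  exact fun k => (key k).1

lemma qq_d1 : ∀ k, (derivative (qq k)).eval 0 = (k : ℝ) * ((k : ℝ) + 1) / 2 := by
  have key : ∀ k, (derivative (qq k)).eval 0 = (k : ℝ) * ((k : ℝ) + 1) / 2 ∧
      (derivative (qq (k+1))).eval 0 = ((k : ℝ) + 1) * ((k : ℝ) + 2) / 2 := by
    intro k
    induction k with
    | zero => constructor <;> simp [qq] <;> norm_num
    | succ m ih =>
      refine ⟨by rw [ih.2]; push_cast; ring, ?_⟩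
      rw [d_qq_step]
      simp only [eval_sub, eval_add, eval_mul, eval_X, eval_ofNat, qq_eval0, ih.1, ih.2]
      push_cast; ring
  exact fun k => (key k).1

lemma qq_d2 : ∀ k, (derivative (derivative (qq k))).eval 0 =
    ((k : ℝ) - 1) * (k : ℝ) * ((k : ℝ) + 1) * ((k : ℝ) + 2) / 12 := by
  have key : ∀ k, (derivative (derivative (qq k))).eval 0 =
      ((k : ℝ) - 1) * (k : ℝ) * ((k : ℝ) + 1) * ((k : ℝ) + 2) / 12 ∧
      (derivative (derivative (qq (k+1)))).eval 0 =
      ((k : ℝ)) * ((k : ℝ) + 1) * ((k : ℝ) + 2) * ((k : ℝ) + 3) / 12 := by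
    intro k
    induction k with
    | zero => constructor <;> simp [qq] <;> norm_num
    | succ m ih =>
      refine ⟨by rw [ih.2]; push_cast; ring, ?_⟩
      rw [dd_qq_step]
      simp only [eval_sub, eval_add, eval_mul, eval_X, eval_ofNat, qq_d1, ih.1, ih.2]
      push_cast; ring
  exact fun k => (key k).1
lemma d_p (k : ℕ) : derivative ((X + 1) * qq (k+1) - qq k) =
    qq (k+1) + (X + 1) * derivative (qq (k+1)) - derivative (qq k) := by
  rw [derivative_sub, derivative_mul]; simp

lemma dd_p (k : ℕ) : derivative (derivative ((X + 1) * qq (k+1) - qq k)) =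
    2 * derivative (qq (k+1)) + (X + 1) * derivative (derivative (qq (k+1)))
      - derivative (derivative (qq k)) := by
  rw [d_p, derivative_sub, derivative_add, derivative_mul]; simp; ring

lemma coeff_one_eq (p : Polynomial ℝ) : p.coeff 1 = (derivative p).eval 0 := by
  rw [← coeff_zero_eq_eval_zero, coeff_derivative]
  push_cast; ring

lemma coeff_two_eq (p : Polynomial ℝ) :
    p.coeff 2 = (derivative (derivative p)).eval 0 / 2 := by
  rw [← coeff_zero_eq_eval_zero, coeff_derivative, coeff_derivative]
  push_cast; ring

lemma trace_L (k : ℕ) :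
    Matrix.trace (pathLaplacian (k+2)) = 2 * ((k : ℝ) + 2) - 2 := by
  rw [Matrix.trace]
  simp only [Matrix.diag, pathLaplacian, Matrix.of_apply, if_pos rfl, if_true, eq_self_iff_true]
  rw [Fin.sum_univ_eq_sum_range (fun i => if i = 0 ∨ i = (k+2) - 1 then (1:ℝ) else 2) (k+2)]
  have : ∀ i ∈ Finset.range (k+2),
      (if i = 0 ∨ i = (k+2) - 1 then (1:ℝ) else 2) =
      2 - (if i = 0 then (1:ℝ) else 0) - (if i = k+1 then (1:ℝ) else 0) := by
    intro i hi
    split_ifs <;> first | omega | norm_num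
  rw [Finset.sum_congr rfl this]
  simp only [Finset.sum_sub_distrib, Finset.sum_const, Finset.card_range, nsmul_eq_mul]
  rw [Finset.sum_ite_eq' (Finset.range (k+2)) 0 (fun _ => (1:ℝ)),
    Finset.sum_ite_eq' (Finset.range (k+2)) (k+1) (fun _ => (1:ℝ))]
  rw [if_pos (by simp), if_pos (by simp)]
  push_cast; ring


/-- The characteristic polynomial `det(sI + L_n)` of the negated path graph Laplacian:
its constant coefficient is `0`, the coefficient of `s` is `n`, the coefficient of `s²`
is `n(n²-1)/6`, the coefficient of `s^{n-1}` is `2(n-1)`, and it is monic. -/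
theorem neg_path_laplacian_charpoly_coeffs (n : ℕ) (hn : 2 ≤ n) :
    (-(pathLaplacian n)).charpoly.coeff 0 = 0 ∧
    (-(pathLaplacian n)).charpoly.coeff 1 = n ∧
    (-(pathLaplacian n)).charpoly.coeff 2 = (n : ℝ) * ((n : ℝ) ^ 2 - 1) / 6 ∧
    (-(pathLaplacian n)).charpoly.coeff (n - 1) = 2 * ((n : ℝ) - 1) ∧
    (-(pathLaplacian n)).charpoly.Monic := by
  obtain ⟨k, rfl⟩ : ∃ k, n = k + 2 := ⟨n - 2, by omega⟩
  refine ⟨?_, ?_, ?_, ?_, Matrix.charpoly_monic _⟩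
  · rw [charpoly_eq, coeff_zero_eq_eval_zero]
    simp [qq_eval0]
  · rw [charpoly_eq, coeff_one_eq, d_p]
    simp only [eval_sub, eval_add, eval_mul, eval_X, eval_one, qq_eval0, qq_d1]
    push_cast; ring
  · rw [charpoly_eq, coeff_two_eq, dd_p]
    simp only [eval_sub, eval_add, eval_mul, eval_X, eval_one, eval_ofNat, qq_d1, qq_d2]
    push_cast; ring
  · have ht := Matrix.trace_eq_neg_charpoly_coeff (-(pathLaplacian (k+2)))
    rw [Matrix.trace_neg, Fintype.card_fin] at ht
    have : (-(pathLaplacian (k+2))).charpoly.coeff (k + 2 - 1) =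
        Matrix.trace (pathLaplacian (k+2)) := by linarith [ht]
    rw [this, trace_L]
    push_cast; ring
end

section
/- Let n be odd and consider the function g(p) = Σ_{j=2}^{n} [(π(j-1)/n)² · cos(π(j-1)(2p-1)/n)] / [sin²(π(j-1)/(2n)) · N_j], where N_j = Σ_{i=1}^{n} cos²(π(j-1)(2i-1)/(2n)). Then g((n+1)/2) > 0; equivalently, Σ_{j=2}^{n} (-1)^{j-1}(π(j-1)/n)² / [sin²(π(j-1)/(2n)) · N_j] > 0. -/
open Real Finset


lemma tele (a : ℝ) (N : ℕ) :
    2 * Real.sin a * ∑ i ∈ Finset.Icc 1 N, Real.cos (a * (2 * (i:ℝ) - 1)) =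
      Real.sin (2 * N * a) := by
  induction N with
  | zero => simp
  | succ N ih =>
    rw [Finset.sum_Icc_succ_top (by omega : 1 ≤ N + 1), mul_add, ih]
    push_cast
    have key : ∀ b : ℝ, Real.sin b + 2 * Real.sin a * Real.cos (b + a) =
        Real.sin (b + 2 * a) := by
      intro b
      rw [Real.cos_add, Real.sin_add, Real.sin_two_mul, Real.cos_two_mul]
      linear_combination (-2) * Real.sin b * (Real.sin_sq_add_cos_sq a)
    have := key (2 * N * a)
    rw [show a * (2 * ((N:ℝ) + 1) - 1) = 2 * N * a + a by ring,
      show 2 * ((N:ℝ) + 1) * a = 2 * N * a + 2 * a by ring]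
    linarith

lemma pairsum (F : ℕ → ℝ) (m : ℕ) :
    ∑ k ∈ Finset.Icc 1 (2 * m), F k =
      ∑ l ∈ Finset.range m, (F (2 * l + 1) + F (2 * l + 2)) := by
  induction m with
  | zero => simp
  | succ m ih =>
    rw [Finset.sum_range_succ, ← ih, show 2 * (m + 1) = 2 * m + 1 + 1 by ring,
      Finset.sum_Icc_succ_top (by omega), Finset.sum_Icc_succ_top (by omega)]
    ring_nf

lemma Nval (n k : ℕ) (hn : 1 ≤ n) (hk1 : 1 ≤ k) (hk2 : k ≤ n - 1) :
    ∑ i ∈ Finset.Icc 1 n, Real.cos (Real.pi * k * (2 * (i:ℝ) - 1) / (2 * n)) ^ 2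
      = n / 2 := by
  have hnne : (n:ℝ) ≠ 0 := Nat.cast_ne_zero.2 (by omega)
  have hkn : (k:ℝ) < n := by exact_mod_cast (by omega : k < n)
  have hk0 : (0:ℝ) < k := by exact_mod_cast (by omega : 0 < k)
  set a : ℝ := Real.pi * k / n with ha
  have hapos : 0 < a := by
    apply div_pos (by positivity) (by positivity)
  have halt : a < Real.pi := by
    rw [ha, div_lt_iff₀ (by positivity)]
    nlinarith [Real.pi_pos]
  have hsa : Real.sin a ≠ 0 := (Real.sin_pos_of_pos_of_lt_pi hapos halt).ne'
  have ht := tele a n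
  have hzero : Real.sin (2 * n * a) = 0 := by
    rw [show 2 * (n:ℝ) * a = (2 * k : ℕ) * Real.pi by rw [ha]; push_cast; field_simp]
    exact Real.sin_nat_mul_pi _
  have hsum : ∑ i ∈ Finset.Icc 1 n, Real.cos (a * (2 * (i:ℝ) - 1)) = 0 := by
    rw [hzero] at ht
    have h2 : 2 * Real.sin a ≠ 0 := by simpa using hsa
    exact (mul_eq_zero.1 ht).resolve_left h2
  have hterm : ∀ i : ℕ,
      Real.cos (Real.pi * k * (2 * (i:ℝ) - 1) / (2 * n)) ^ 2 =
        1 / 2 + Real.cos (a * (2 * (i:ℝ) - 1)) / 2 := by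
    intro i
    rw [Real.cos_sq]
    congr 2
    rw [ha]
    field_simp
  rw [Finset.sum_congr rfl (fun i _ => hterm i), Finset.sum_add_distrib,
    ← Finset.sum_div, ← Finset.sum_div, hsum, Finset.sum_const, Nat.card_Icc]
  simp

lemma sin_div_mono {x y : ℝ} (hx : 0 < x) (hxy : x < y) (hy : y ≤ Real.pi) :
    x * Real.sin y < y * Real.sin x := by
  have hy0 : (0:ℝ) < y := by linarith
  have ha : (0:ℝ) < 1 - x / y := by
    have : x / y < 1 := (div_lt_one hy0).2 hxy; linarith
  have hb : (0:ℝ) < x / y := by positivity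
  have h := strictConcaveOn_sin_Icc.2 (⟨le_rfl, Real.pi_pos.le⟩ : (0:ℝ) ∈ Set.Icc 0 Real.pi)
    (⟨hy0.le, hy⟩ : y ∈ Set.Icc 0 Real.pi) (by nlinarith) ha hb (by ring)
  simp only [smul_eq_mul, mul_zero, Real.sin_zero, zero_add, mul_zero] at h
  rw [div_mul_cancel₀ _ hy0.ne', div_mul_eq_mul_div, div_lt_iff₀ hy0] at h
  nlinarith [h]

lemma Amono (n k1 k2 : ℕ) (h1 : 1 ≤ k1) (h12 : k1 < k2) (h2 : k2 ≤ n - 1) (hn : 3 ≤ n) :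
    (Real.pi * k1 / n) ^ 2 / (Real.sin (Real.pi * k1 / (2 * n)) ^ 2 * ((n:ℝ) / 2)) <
      (Real.pi * k2 / n) ^ 2 / (Real.sin (Real.pi * k2 / (2 * n)) ^ 2 * ((n:ℝ) / 2)) := by
  have hn0 : (0:ℝ) < n := by exact_mod_cast (by omega : 0 < n)
  have hk10 : (0:ℝ) < k1 := by exact_mod_cast (by omega : 0 < k1)
  have hk12 : (k1:ℝ) < k2 := by exact_mod_cast h12
  have hk2n : (k2:ℝ) < n := by exact_mod_cast (by omega : k2 < n)
  set x : ℝ := Real.pi * k1 / (2 * n) with hxdef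
  set y : ℝ := Real.pi * k2 / (2 * n) with hydef
  have hx : 0 < x := by positivity
  have hxy : x < y := by
    rw [hxdef, hydef]
    gcongr
  have hy2 : y < Real.pi / 2 := by
    rw [hydef, div_lt_iff₀ (by positivity)]
    nlinarith [Real.pi_pos]
  have hsx : 0 < Real.sin x := Real.sin_pos_of_pos_of_lt_pi hx
    (by nlinarith [Real.pi_pos])
  have hsy : 0 < Real.sin y := Real.sin_pos_of_pos_of_lt_pi (hx.trans hxy)
    (by nlinarith [Real.pi_pos])
  have hmono := sin_div_mono hx hxy (by nlinarith [Real.pi_pos])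
  have hsq : (x * Real.sin y) ^ 2 < (y * Real.sin x) ^ 2 :=
    pow_lt_pow_left₀ hmono (by positivity) (by norm_num)
  have e1 : Real.pi * k1 / n = 2 * x := by rw [hxdef]; field_simp
  have e2 : Real.pi * k2 / n = 2 * y := by rw [hydef]; field_simp
  rw [e1, e2, div_lt_div_iff₀ (by positivity) (by positivity)]
  nlinarith [mul_lt_mul_of_pos_left hsq hn0]


/-- For odd `n ≥ 3`, with `N_j = ∑_{i=1}^n cos²(π(j-1)(2i-1)/(2n))`, the sum
`∑_{j=2}^n (-1)^{j-1} (π(j-1)/n)² / (sin²(π(j-1)/(2n)) · N_j)` is positive.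
This is (up to a positive factor) the second derivative, at the physical center
`p = (n+1)/2`, of the second-order term of the smallest eigenvalue of the perturbed
path Laplacian as a function of a real port position `p`. -/
theorem second_derivative_positive_at_center (n : ℕ) (hn : 3 ≤ n) (hodd : Odd n) :
    0 < ∑ j ∈ Finset.Icc 2 n,
        (-1 : ℝ) ^ (j - 1) * (Real.pi * ((j : ℝ) - 1) / n) ^ 2 /
          ((Real.sin (Real.pi * ((j : ℝ) - 1) / (2 * n))) ^ 2 *
            (∑ i ∈ Finset.Icc 1 n,
              (Real.cos (Real.pi * ((j : ℝ) - 1) * (2 * (i : ℝ) - 1) / (2 * n))) ^ 2)) := by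
  obtain ⟨m, hm⟩ := hodd
  have hm1 : 1 ≤ m := by omega
  have hG : ∀ k : ℕ, True := fun _ => trivial
  have hstep1 : (∑ j ∈ Finset.Icc 2 n,
        (-1 : ℝ) ^ (j - 1) * (Real.pi * ((j : ℝ) - 1) / n) ^ 2 /
          ((Real.sin (Real.pi * ((j : ℝ) - 1) / (2 * n))) ^ 2 *
            (∑ i ∈ Finset.Icc 1 n,
              (Real.cos (Real.pi * ((j : ℝ) - 1) * (2 * (i : ℝ) - 1) / (2 * n))) ^ 2))) =
      ∑ j ∈ Finset.Icc 2 n,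
        (-1 : ℝ) ^ (j - 1) * (Real.pi * ((j - 1 : ℕ) : ℝ) / n) ^ 2 /
          ((Real.sin (Real.pi * ((j - 1 : ℕ) : ℝ) / (2 * n))) ^ 2 * ((n : ℝ) / 2)) := by
    apply Finset.sum_congr rfl
    intro j hj
    simp only [Finset.mem_Icc] at hj
    have hcast : ((j : ℝ) - 1) = ((j - 1 : ℕ) : ℝ) := by
      have : 1 ≤ j := by omega
      push_cast [this]
      ring
    rw [hcast, Nval n (j - 1) (by omega) (by omega) (by omega)]
  rw [hstep1]
  have hmap : Finset.Icc 2 n = (Finset.Icc 1 (n - 1)).map (addRightEmbedding 1) := by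
    rw [Finset.map_add_right_Icc]
    congr 1 <;> omega
  rw [hmap, Finset.sum_map]
  simp only [addRightEmbedding_apply, Nat.add_sub_cancel]
  rw [show n - 1 = 2 * m by omega, pairsum]
  apply Finset.sum_pos _ (by simp; omega)
  intro l hl
  simp only [Finset.mem_range] at hl
  have hA := Amono n (2 * l + 1) (2 * l + 2) (by omega) (by omega) (by omega) hn
  have hs1 : ((-1 : ℝ)) ^ (2 * l + 1) = -1 := Odd.neg_one_pow ⟨l, by ring⟩
  have hs2 : ((-1 : ℝ)) ^ (2 * l + 2) = 1 := Even.neg_one_pow ⟨l + 1, by ring⟩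
  rw [hs1, hs2]
  push_cast
  rw [neg_one_mul, one_mul, neg_div]
  push_cast at hA
  linarith
end
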